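/- arXiv:0903.5316 — 2 statements merged into one kernel-verified Lean document; each statement's English description precedes it below -/
import Mathlib

section
/- The Thue–Morse sequence contains no factor of the form a·u·a·u·a, where a is a single letter and u is a (possibly empty) word. -/
/-- The word `u` occurs in the sequence `x` at position `i`. -/
def occursAt {A : Type*} (x : ℕ → A) (u : List A) (i : ℕ) : Prop :=
  ∀ j : Fin u.length, x (i + (j : ℕ)) = u.get j

open Fin.NatCast in
/-- The Thue–Morse sequence: parity of the binary digit sum. -/
def thue (n : ℕ) : Fin 2 := ((Nat.digits 2 n).sum : Fin 2)

lemma thue_two_mul (n : ℕ) : thue (2 * n) = thue n := by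
  rcases Nat.eq_zero_or_pos n with h | h
  · simp [h]
  · unfold thue
    rw [Nat.digits_def' (by norm_num : 1 < 2) (by omega)]
    simp [Nat.mul_div_cancel_left, Nat.mul_mod_right]

lemma thue_two_mul_add_one (n : ℕ) : thue (2 * n + 1) = thue n + 1 := by
  unfold thue
  rw [Nat.digits_def' (by norm_num : 1 < 2) (by omega)]
  have h1 : (2 * n + 1) % 2 = 1 := by omega
  have h2 : (2 * n + 1) / 2 = n := by omega
  rw [h1, h2]
  push_cast [List.sum_cons]
  apply Fin.ext
  simp only [Fin.val_add, Fin.val_natCast, Fin.val_one]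
  omega

lemma thue_ne (k : ℕ) : thue (2*k) ≠ thue (2*k+1) := by
  rw [thue_two_mul, thue_two_mul_add_one]
  have : ∀ a : Fin 2, a ≠ a + 1 := by decide
  exact this _

lemma no_aaa (m : ℕ) : ¬ (thue m = thue (m+1) ∧ thue (m+1) = thue (m+2)) := by
  rintro ⟨h1, h2⟩
  rcases Nat.even_or_odd m with ⟨k, hk⟩ | ⟨k, hk⟩
  · exact thue_ne k (by rw [show 2*k = m by omega]; exact h1)
  · exact thue_ne (k+1) (by rw [show 2*(k+1) = m+1 by omega]; exact h2)

lemma d_even (k : ℕ) : thue (2*k) + thue (2*k+1) = 1 := by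
  rw [thue_two_mul, thue_two_mul_add_one]
  have : ∀ a : Fin 2, a + (a+1) = 1 := by decide
  exact this _

lemma d_odd (k : ℕ) (h : thue (2*k+1) + thue (2*k+2) = 1) : thue k = thue (k+1) := by
  rw [thue_two_mul_add_one, show 2*k+2 = 2*(k+1) by ring, thue_two_mul] at h
  have : ∀ a b : Fin 2, a + 1 + b = 1 → a = b := by decide
  exact this _ _ h

lemma no_period : ∀ n, 1 ≤ n → ∀ i, ¬ (∀ j, j ≤ n → thue (i+j) = thue (i+n+j)) := by
  intro n
  induction n using Nat.strong_induction_on with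
  | _ n ih =>
    intro hn i H
    rcases Nat.even_or_odd n with ⟨m, hm⟩ | ⟨m, hm⟩
    · -- n even, n = m + m
      have hm1 : 1 ≤ m := by omega
      rcases Nat.even_or_odd i with ⟨q, hq⟩ | ⟨q, hq⟩
      · refine ih m (by omega) hm1 q ?_
        intro j hj
        have h := H (2*j) (by omega)
        rw [show i + 2*j = 2*(q+j) by omega, show i + n + 2*j = 2*(q+m+j) by omega,
            thue_two_mul, thue_two_mul] at h
        exact h
      · refine ih m (by omega) hm1 q ?_
        intro j hj
        have h := H (2*j) (by omega)
        rw [show i + 2*j = 2*(q+j)+1 by omega, show i + n + 2*j = 2*(q+m+j)+1 by omega,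
            thue_two_mul_add_one, thue_two_mul_add_one] at h
        exact add_right_cancel h
    · -- n odd, n = 2m+1
      rcases Nat.eq_zero_or_pos m with hm0 | hm1
      · -- n = 1
        have h0 := H 0 (by omega)
        have h1 := H 1 (by omega)
        rw [show i + 0 = i by omega, show i + n + 0 = i + 1 by omega] at h0
        rw [show i + 1 = i + 1 by omega, show i + n + 1 = i + 2 by omega] at h1
        exact no_aaa i ⟨h0, h1⟩
      · -- n = 2m+1, m ≥ 1, so n ≥ 3
        have claim : ∀ k, i ≤ 2*k+1 → 2*k+1 + 1 ≤ i + 2*n → thue k = thue (k+1) := by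
          intro k hk1 hk2
          apply d_odd k
          by_cases hc : 2*k+1 < i + n
          · have hA := H (2*k+1-i) (by omega)
            have hB := H (2*k+1-i+1) (by omega)
            rw [show i + (2*k+1-i) = 2*k+1 by omega,
                show i + n + (2*k+1-i) = 2*(k+m+1) by omega] at hA
            rw [show i + (2*k+1-i+1) = 2*k+2 by omega,
                show i + n + (2*k+1-i+1) = 2*(k+m+1)+1 by omega] at hB
            rw [hA, hB]
            exact d_even (k+m+1)
          · have hkm : m ≤ k := by omega
            have hA := H (2*k+1-i-n) (by omega)
            have hB := H (2*k+1-i-n+1) (by omega)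
            rw [show i + (2*k+1-i-n) = 2*(k-m) by omega,
                show i + n + (2*k+1-i-n) = 2*k+1 by omega] at hA
            rw [show i + (2*k+1-i-n+1) = 2*(k-m)+1 by omega,
                show i + n + (2*k+1-i-n+1) = 2*k+2 by omega] at hB
            rw [← hA, ← hB]
            exact d_even (k-m)
        set k0 := i / 2 with hk0
        have hik : i ≤ 2*k0+1 ∧ 2*k0 ≤ i := by omega
        have c1 := claim k0 (by omega) (by omega)
        have c2 := claim (k0+1) (by omega) (by omega)
        rw [show k0+1+1 = k0+2 by omega] at c2
        exact no_aaa k0 ⟨c1, c2⟩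

lemma occursAt_append {A : Type*} (x : ℕ → A) (s t : List A) (i : ℕ)
    (h : occursAt x (s ++ t) i) :
    occursAt x s i ∧ occursAt x t (i + s.length) := by
  constructor
  · intro j
    have hj : (j : ℕ) < (s ++ t).length := by
      simp only [List.length_append]; omega
    have h' := h ⟨j, hj⟩
    simp only [List.get_eq_getElem] at h' ⊢
    rw [List.getElem_append_left j.isLt] at h'
    exact h'
  · intro j
    have hj : s.length + (j : ℕ) < (s ++ t).length := by
      simp only [List.length_append]; omega
    have h' := h ⟨s.length + j, hj⟩
    simp only [List.get_eq_getElem] at h' ⊢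
    rw [show i + s.length + (j : ℕ) = i + (s.length + (j : ℕ)) by omega]
    rw [h']
    rw [List.getElem_append_right (by omega)]
    congr 1
    omega

/-- The Thue–Morse sequence contains no factor of the form `a·u·a·u·a`. -/
theorem thue_no_auaua :
    ¬ ∃ (a : Fin 2) (u : List (Fin 2)) (i : ℕ),
      occursAt thue ([a] ++ u ++ [a] ++ u ++ [a]) i := by
  rintro ⟨a, u, i, h⟩
  set n := u.length + 1 with hn
  have hw1 : ([a] ++ u ++ [a] ++ u ++ [a])
      = (([a] ++ u) ++ [a]) ++ (u ++ [a]) := by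
    simp [List.append_assoc]
  have hw2 : ([a] ++ u ++ [a] ++ u ++ [a])
      = ([a] ++ u) ++ (([a] ++ u) ++ [a]) := by
    simp [List.append_assoc]
  have occ1 : occursAt thue (([a] ++ u) ++ [a]) i :=
    (occursAt_append _ _ _ _ (hw1 ▸ h)).1
  have occ2 : occursAt thue (([a] ++ u) ++ [a]) (i + ([a] ++ u).length) :=
    (occursAt_append _ _ _ _ (hw2 ▸ h)).2
  have hlen : ([a] ++ u).length = n := by
    simp [hn, List.length_append]
  rw [hlen] at occ2
  refine no_period n (by omega) i ?_
  intro j hj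
  have hjlt : j < (([a] ++ u) ++ [a]).length := by
    simp [List.length_append]; omega
  have e1 := occ1 ⟨j, hjlt⟩
  have e2 := occ2 ⟨j, hjlt⟩
  exact e1.trans e2.symm
end

section
/- The Thue–Morse sequence is almost periodic (uniformly recurrent): for every factor u of t there exists l such that every window of length l in t contains an occurrence of u. -/
/-- A sequence is almost periodic (uniformly recurrent) if every factor
occurs in every sufficiently long window. -/
def AlmostPeriodic {A : Type*} (x : ℕ → A) : Prop :=
  ∀ u : List A, (∃ i, occursAt x u i) →
    ∃ l : ℕ, ∀ i : ℕ, ∃ j : ℕ, i ≤ j ∧ j + u.length ≤ i + l ∧ occursAt x u j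

lemma thue_block (m : ℕ) : ∀ j r, r < 2 ^ m → thue (j * 2 ^ m + r) = thue j + thue r := by
  induction m with
  | zero =>
    intro j r hr
    have : r = 0 := by omega
    subst this
    simp [thue]
  | succ m ih =>
    intro j r hr
    rcases Nat.even_or_odd r with ⟨q, hq⟩ | ⟨q, hq⟩
    · have hq' : q < 2 ^ m := by rw [pow_succ] at hr; omega
      have heq : j * 2 ^ (m + 1) + r = 2 * (j * 2 ^ m + q) := by
        rw [pow_succ, ← mul_assoc]; omega
      have heq2 : r = 2 * q := by omega
      rw [heq, thue_two_mul, ih j q hq', heq2, thue_two_mul]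
    · have hq' : q < 2 ^ m := by rw [pow_succ] at hr; omega
      have heq : j * 2 ^ (m + 1) + r = 2 * (j * 2 ^ m + q) + 1 := by
        rw [pow_succ, ← mul_assoc]; omega
      rw [heq, thue_two_mul_add_one, ih j q hq', hq, thue_two_mul_add_one, add_assoc]

lemma thue_zero_of (n : ℕ) : thue (2 * n) = 0 ∨ thue (2 * n + 1) = 0 := by
  rw [thue_two_mul, thue_two_mul_add_one]
  have : ∀ a : Fin 2, a = 0 ∨ a + 1 = 0 := by decide
  exact this (thue n)

/-- The Thue–Morse sequence is almost periodic. -/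
theorem thue_almostPeriodic : AlmostPeriodic thue := by
  rintro u ⟨i, hi⟩
  set m := i + u.length with hm
  set N := 2 ^ m with hNdef
  have hN : 0 < N := Nat.pow_pos (n := m) (by norm_num)
  have hle : i + u.length ≤ N := le_of_lt (Nat.lt_two_pow_self (n := m))
  refine ⟨4 * N, fun s => ?_⟩
  set q := s / N + 1 with hq
  have hsq : s < q * N := by
    have hmod : s % N < N := Nat.mod_lt s hN
    have hdm : N * (s / N) + s % N = s := Nat.div_add_mod s N
    have h3 : q * N = N * (s / N) + N := by rw [hq]; ring
    omega
  have hqs : q * N ≤ s + N := by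
    have h1 := Nat.div_mul_le_self s N
    have h2 : q * N = (s / N) * N + N := by ring
    omega
  set n := (q + 1) / 2 with hn
  have h2n : q ≤ 2 * n ∧ 2 * n + 1 ≤ q + 2 := by omega
  obtain ⟨k, hk0, hkl, hku⟩ : ∃ k, thue k = 0 ∧ q ≤ k ∧ k ≤ q + 2 := by
    rcases thue_zero_of n with h | h
    · exact ⟨2 * n, h, h2n.1, by omega⟩
    · exact ⟨2 * n + 1, h, by omega, by omega⟩
  refine ⟨k * N + i, ?_, ?_, ?_⟩
  · have : q * N ≤ k * N := Nat.mul_le_mul_right N hkl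
    omega
  · have : k * N ≤ (q + 2) * N := Nat.mul_le_mul_right N hku
    have h2 : (q + 2) * N = q * N + 2 * N := by ring
    omega
  · intro j
    have hj : i + (j : ℕ) < N := by
      have := j.isLt
      omega
    rw [add_assoc, thue_block m k (i + j) hj, hk0, zero_add]
    exact hi j
end
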